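/- Let d ≥ 4 be an integer and for a positive integer m define the polynomial F_m(X) = ((d−3)X + 1)^{d−3} · ((m/6)X³ + X² + ((12−m)/6)X + 1) ∈ ℚ[X]. Then there exists a positive integer M such that for every integer m ≥ M, the coefficient of X^j in F_m is negative for every j with 1 ≤ j ≤ d−2. -/
import Mathlib

open Polynomial

lemma coeff_lin_pow (a : ℚ) (n j : ℕ) :
    ((C a * X + 1 : ℚ[X]) ^ n).coeff j = a ^ j * n.choose j := by
  rw [add_pow, finset_sum_coeff]
  simp only [one_pow, mul_one, mul_pow, ← C_pow, ← C_eq_natCast, ← C_mul, coeff_mul_C,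
    coeff_C_mul, coeff_X_pow]
  simp only [ite_mul, one_mul, zero_mul, mul_ite, mul_one, mul_zero,
    Finset.sum_ite_eq, Finset.mem_range, Nat.lt_succ_iff]
  split
  · ring
  · next h => simp [Nat.choose_eq_zero_of_lt (show n < j by omega)]

lemma b_lt (n k : ℕ) (h : k + 2 ≤ n) :
    n.choose k * n ^ k < n.choose (k + 2) * n ^ (k + 2) := by
  obtain ⟨t, rfl⟩ : ∃ t, n = k + 2 + t := ⟨n - (k + 2), by omega⟩
  have h1 := Nat.choose_succ_right_eq (k + 2 + t) k
  have h2 := Nat.choose_succ_right_eq (k + 2 + t) (k + 1)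
  rw [show k + 2 + t - k = t + 2 by omega] at h1
  rw [show k + 2 + t - (k + 1) = t + 1 by omega] at h2
  have hpos : 0 < (k + 2 + t).choose k := Nat.choose_pos (by omega)
  set n := k + 2 + t with hn
  rw [← Nat.cast_lt (α := ℚ)]
  push_cast
  have h1q : ((n.choose (k+1) : ℚ)) * (k + 1) = (n.choose k : ℚ) * (t + 2) := by
    exact_mod_cast congrArg (Nat.cast (R := ℚ)) h1
  have h2q : ((n.choose (k+2) : ℚ)) * (k + 2) = (n.choose (k+1) : ℚ) * (t + 1) := by
    exact_mod_cast congrArg (Nat.cast (R := ℚ)) h2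
  have key : (n.choose (k+2) : ℚ) * ((k + 2) * (k + 1)) = (n.choose k : ℚ) * ((t + 2) * (t + 1)) := by
    linear_combination ((k:ℚ)+1) * h2q + ((t:ℚ)+1) * h1q
  have hc0 : (0:ℚ) < (n.choose k : ℚ) := by exact_mod_cast hpos
  have hnp : (0:ℚ) < (n:ℚ) ^ k := by positivity
  have hnn : ((k:ℚ) + 1) * ((k:ℚ) + 2) < (n:ℚ) * (n:ℚ) * (((t:ℚ)+2) * ((t:ℚ)+1)) := by
    have : (n:ℚ) = (k:ℚ) + 2 + (t:ℚ) := by push_cast [hn]; ring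
    rw [this]; nlinarith [sq_nonneg ((t:ℚ)), (show (0:ℚ) ≤ (k:ℚ) from by positivity), (show (0:ℚ) ≤ (t:ℚ) from by positivity)]
  have expand : ((n:ℚ)) ^ (k + 2) = (n:ℚ) ^ k * ((n:ℚ) * (n:ℚ)) := by ring
  rw [expand]
  have key2 : (n.choose (k+2) : ℚ) * ((n:ℚ)^k * ((n:ℚ)*(n:ℚ))) * (((k:ℚ) + 2) * ((k:ℚ) + 1)) =
      (n.choose k : ℚ) * (((t:ℚ) + 2) * ((t:ℚ) + 1)) * ((n:ℚ)^k * ((n:ℚ)*(n:ℚ))) := by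
    linear_combination ((n:ℚ)^k * ((n:ℚ)*(n:ℚ))) * key
  nlinarith [key2, mul_lt_mul_of_pos_left hnn (mul_pos hc0 hnp),
    show (0:ℚ) < ((k:ℚ)+2)*((k:ℚ)+1) from by positivity]

lemma b_le (n k : ℕ) (hn : 1 ≤ n) : n.choose k * n ^ k ≤ 2 ^ n * n ^ n := by
  rcases le_or_gt k n with hk | hk
  · have h1 : n.choose k ≤ 2 ^ n := by
      rw [← Nat.sum_range_choose n]
      exact Finset.single_le_sum (fun i _ => Nat.zero_le _) (Finset.mem_range.mpr (by omega))
    have h2 : n ^ k ≤ n ^ n := Nat.pow_le_pow_right hn hk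
    exact Nat.mul_le_mul h1 h2
  · simp [Nat.choose_eq_zero_of_lt hk]

theorem middle_coefficients_negative_for_large_m (d : ℕ) (hd : 4 ≤ d) :
    ∃ M : ℕ, 0 < M ∧ ∀ m : ℕ, M ≤ m →
      ∀ j : ℕ, 1 ≤ j → j ≤ d - 2 →
        ((C ((d : ℚ) - 3) * X + 1) ^ (d - 3) *
          (C ((m : ℚ) / 6) * X ^ 3 + X ^ 2 + C ((12 - (m : ℚ)) / 6) * X + 1)).coeff j < 0 := by
  set n := d - 3 with hn
  have hn1 : 1 ≤ n := by omega
  set B := 2 ^ n * n ^ n with hB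
  have hB1 : 1 ≤ B := by
    have : 0 < B := by rw [hB]; positivity
    omega
  refine ⟨6 * (4 * B + 1), by omega, fun m hm j hj1 hj2 => ?_⟩
  have hcast : ((d : ℚ) - 3) = ((n : ℕ) : ℚ) := by
    rw [hn]; push_cast [Nat.cast_sub (show 3 ≤ d by omega)]; ring
  set b : ℕ → ℕ := fun k => n.choose k * n ^ k with hb
  have hcoeff : ∀ k, ((C ((d : ℚ) - 3) * X + 1) ^ (d - 3)).coeff k = (b k : ℚ) := by
    intro k
    rw [hcast, coeff_lin_pow]
    push_cast [hb]
    ring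
  have expand : ((C ((d : ℚ) - 3) * X + 1) ^ (d - 3) *
        (C ((m : ℚ) / 6) * X ^ 3 + X ^ 2 + C ((12 - (m : ℚ)) / 6) * X + 1)).coeff j =
      ((m : ℚ) / 6) * (if 3 ≤ j then (b (j - 3) : ℚ) else 0) +
        (if 2 ≤ j then (b (j - 2) : ℚ) else 0) +
        ((12 - (m : ℚ)) / 6) * (b (j - 1) : ℚ) + (b j : ℚ) := by
    have hprod : (C ((d : ℚ) - 3) * X + 1) ^ (d - 3) *
          (C ((m : ℚ) / 6) * X ^ 3 + X ^ 2 + C ((12 - (m : ℚ)) / 6) * X + 1) =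
        C ((m : ℚ) / 6) * ((C ((d : ℚ) - 3) * X + 1) ^ (d - 3) * X ^ 3) +
          (C ((d : ℚ) - 3) * X + 1) ^ (d - 3) * X ^ 2 +
          C ((12 - (m : ℚ)) / 6) * ((C ((d : ℚ) - 3) * X + 1) ^ (d - 3) * X ^ 1) +
          (C ((d : ℚ) - 3) * X + 1) ^ (d - 3) := by ring
    rw [hprod]
    simp only [coeff_add, coeff_C_mul, coeff_mul_X_pow', hcoeff]
    rw [if_pos (show 1 ≤ j from hj1)]
  rw [expand]
  -- bounds
  have hbB : ∀ k, (b k : ℚ) ≤ (B : ℚ) := fun k => by exact_mod_cast b_le n k hn1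
  have hbnn : ∀ k, (0:ℚ) ≤ (b k : ℚ) := fun k => by positivity
  have hm6 : 4 * (B : ℚ) + 1 ≤ (m : ℚ) / 6 := by
    have : (6 * (4 * B + 1) : ℕ) ≤ (m : ℕ) := hm
    have h' : ((6 * (4 * B + 1) : ℕ) : ℚ) ≤ (m : ℚ) := by exact_mod_cast this
    push_cast at h'
    linarith
  have hb0 : (b 0 : ℚ) = 1 := by simp [hb]
  have hb1 : (1:ℚ) ≤ (b 1 : ℚ) := by
    have : 1 ≤ b 1 := by
      simp only [hb, Nat.choose_one_right, pow_one]
      nlinarith [hn1]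
    exact_mod_cast this
  rcases lt_or_ge j 3 with hj3 | hj3
  · interval_cases j
    · simp only [show ¬ (3 ≤ 1) by omega, show ¬ (2 ≤ 1) by omega, if_false]
      simp only [Nat.sub_self, hb0]
      have := hbB 1
      linarith
    · simp only [show ¬ (3 ≤ 2) by omega, show (2:ℕ) ≤ 2 from le_refl _, if_true, if_false]
      simp only [show (2:ℕ) - 2 = 0 by omega, show (2:ℕ) - 1 = 1 by omega, hb0]
      have h2 := hbB 2
      have h1 := hbB 1
      have hprod : (4 * (B:ℚ) + 1) * 1 ≤ ((m:ℚ)/6) * (b 1 : ℚ) :=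
        mul_le_mul hm6 hb1 (by norm_num) (by linarith)
      nlinarith [hbnn 2]
  · rw [if_pos (show 3 ≤ j by omega), if_pos (show 2 ≤ j by omega)]
    have hlt : b (j - 3) < b (j - 1) := by
      have h := b_lt n (j - 3) (by omega)
      rwa [show j - 3 + 2 = j - 1 by omega] at h
    have hltq : (b (j - 3) : ℚ) + 1 ≤ (b (j - 1) : ℚ) := by exact_mod_cast hlt
    have hprod : (4 * (B:ℚ) + 1) * 1 ≤ ((m:ℚ)/6) * ((b (j-1) : ℚ) - (b (j-3) : ℚ)) :=
      mul_le_mul hm6 (by linarith) (by norm_num) (by linarith)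
    have h1 := hbB j
    have h2 := hbB (j - 1)
    have h3 := hbB (j - 2)
    nlinarith [hbnn (j-3)]
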